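/- arXiv:2605.07996 — 3 statements merged into one kernel-verified Lean document; each statement's English description precedes it below -/
import Mathlib

section
/- Let K voters each have a unit-normalized nonnegative score vector v_k over m candidates, and positive scales s_k. Define scaled welfare SW^s(x) = (1/K) sum_k s_k (v_k · x) and unscaled welfare SW(x) = (1/K) sum_k (v_k · x), noting 0 ≤ SW(x) ≤ 1 for any lottery x. Let x_cs maximize SW^s, x_c maximize SW, and x_ν be any lottery with SW(x_c) − SW(x_ν) ≤ d⁺ for some d⁺ ≥ 0. Then SW^s(x_cs) − SW^s(x_ν) ≤ (max_k s_k − min_k s_k) + (min_k s_k) · d⁺. -/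
open Finset

/-- `x` is a lottery (probability vector) over `m` candidates. -/
def IsLottery {m : ℕ} (x : Fin m → ℝ) : Prop :=
  (∀ i, 0 ≤ x i) ∧ ∑ i, x i = 1

/-- Additive scaled-distortion bound (Theorem on additive scaled distortion). -/
theorem scaled_distortion_add
    (K m : ℕ) (hK : 0 < K)
    (v : Fin K → Fin m → ℝ)
    (hv0 : ∀ k i, 0 ≤ v k i) (hv1 : ∀ k, ∑ i, v k i = 1)
    (s : Fin K → ℝ) (hs : ∀ k, 0 < s k)
    (SWs SW : (Fin m → ℝ) → ℝ)
    (hSWs : ∀ x, SWs x = (1 / (K : ℝ)) * ∑ k, s k * ∑ i, v k i * x i)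
    (hSW : ∀ x, SW x = (1 / (K : ℝ)) * ∑ k, ∑ i, v k i * x i)
    (xcs xc xν : Fin m → ℝ)
    (hxcs : IsLottery xcs) (hxc : IsLottery xc) (hxν : IsLottery xν)
    (hxcs_opt : ∀ x, IsLottery x → SWs x ≤ SWs xcs)
    (hxc_opt : ∀ x, IsLottery x → SW x ≤ SW xc)
    (dplus : ℝ) (hd0 : 0 ≤ dplus)
    (hdist : SW xc - SW xν ≤ dplus)
    (hne : (Finset.univ : Finset (Fin K)).Nonempty) :
    SWs xcs - SWs xν ≤
      (Finset.univ.sup' hne s - Finset.univ.inf' hne s)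
        + (Finset.univ.inf' hne s) * dplus := by
  set M := Finset.univ.sup' hne s with hM
  set L := Finset.univ.inf' hne s with hL
  have hKpos : (0:ℝ) < K := by exact_mod_cast hK
  obtain ⟨k0, -, hk0⟩ := Finset.exists_mem_eq_inf' hne s
  have hLpos : 0 < L := by rw [hL, hk0]; exact hs k0
  have hLM : L ≤ M := le_trans (by rw [hL, hk0] : L ≤ s k0)
    (Finset.le_sup' s (Finset.mem_univ k0))
  -- utility bounds for any lottery
  have hu0 : ∀ (x : Fin m → ℝ), IsLottery x → ∀ k, 0 ≤ ∑ i, v k i * x i := by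
    intro x hx k
    exact Finset.sum_nonneg fun i _ => mul_nonneg (hv0 k i) (hx.1 i)
  have hu1 : ∀ (x : Fin m → ℝ), IsLottery x → ∀ k, ∑ i, v k i * x i ≤ 1 := by
    intro x hx k
    calc ∑ i, v k i * x i ≤ ∑ i, v k i := by
          refine Finset.sum_le_sum fun i _ => ?_
          have hxle : x i ≤ 1 := by
            rw [← hx.2]
            exact Finset.single_le_sum (fun j _ => hx.1 j) (Finset.mem_univ i)
          nlinarith [hv0 k i, hx.1 i]
      _ = 1 := hv1 k
  -- SW bounds
  have hSW0 : ∀ (x : Fin m → ℝ), IsLottery x → 0 ≤ SW x := by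
    intro x hx
    rw [hSW]
    exact mul_nonneg (by positivity) (Finset.sum_nonneg fun k _ => hu0 x hx k)
  have hSW1 : ∀ (x : Fin m → ℝ), IsLottery x → SW x ≤ 1 := by
    intro x hx
    rw [hSW]
    have : ∑ k, ∑ i, v k i * x i ≤ ∑ k : Fin K, (1:ℝ) :=
      Finset.sum_le_sum fun k _ => hu1 x hx k
    simp only [Finset.sum_const, Finset.card_univ, Fintype.card_fin, nsmul_eq_mul,
      mul_one] at this
    rw [div_mul_eq_mul_div, one_mul, div_le_one hKpos]
    exact this
  -- SWs x ≤ M * SW x and L * SW x ≤ SWs x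
  have hKnn : (0:ℝ) ≤ 1 / (K:ℝ) := by positivity
  have hup : SWs xcs ≤ M * SW xcs := by
    rw [hSWs, hSW]
    have hsum : ∑ k, s k * ∑ i, v k i * xcs i ≤ ∑ k, M * ∑ i, v k i * xcs i :=
      Finset.sum_le_sum fun k _ =>
        mul_le_mul_of_nonneg_right (Finset.le_sup' s (Finset.mem_univ k))
          (hu0 xcs hxcs k)
    calc 1 / (K:ℝ) * ∑ k, s k * ∑ i, v k i * xcs i
        ≤ 1 / (K:ℝ) * ∑ k, M * ∑ i, v k i * xcs i :=
          mul_le_mul_of_nonneg_left hsum hKnn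
      _ = M * (1 / (K:ℝ) * ∑ k, ∑ i, v k i * xcs i) := by
          rw [← Finset.mul_sum]; ring
  have hlo : L * SW xν ≤ SWs xν := by
    rw [hSWs, hSW]
    have hsum : ∑ k, L * ∑ i, v k i * xν i ≤ ∑ k, s k * ∑ i, v k i * xν i :=
      Finset.sum_le_sum fun k _ =>
        mul_le_mul_of_nonneg_right (Finset.inf'_le s (Finset.mem_univ k))
          (hu0 xν hxν k)
    calc L * (1 / (K:ℝ) * ∑ k, ∑ i, v k i * xν i)
        = 1 / (K:ℝ) * ∑ k, L * ∑ i, v k i * xν i := by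
          rw [← Finset.mul_sum]; ring
      _ ≤ 1 / (K:ℝ) * ∑ k, s k * ∑ i, v k i * xν i :=
          mul_le_mul_of_nonneg_left hsum hKnn
  have h1 : SW xcs ≤ SW xc := hxc_opt xcs hxcs
  have h2 : SW xc ≤ 1 := hSW1 xc hxc
  have h3 : 0 ≤ SW xc := hSW0 xc hxc
  nlinarith [mul_le_mul_of_nonneg_left h1 (le_trans hLpos.le hLM),
    mul_le_mul_of_nonneg_left hdist hLpos.le]
end

section
/- Consider a two-player game where player 1's strategies are probability vectors over finite action set A_1 and player 2's over A_2, with bilinear utility u_1 taking values in [0,1]. Fix sequences of strategies x¹_1,…,x¹_T for player 1 and x²_1,…,x²_T for player 2 such that for every t' with 2 ≤ t' ≤ T, the strategy x¹_{t'} is a δ-approximate best response to the average x̄²_{t'−1} = (1/(t'−1)) sum_{t=1}^{t'−1} x²_t, i.e. u_1(x¹_{t'}, x̄²_{t'−1}) ≥ u_1(z, x̄²_{t'−1}) − δ for all strategies z. Let x̄¹_T and x̄²_T be the time averages over T rounds. Then for every strategy z, u_1(z, x̄²_T) − u_1(x̄¹_T, x̄²_T) ≤ (T+1)/(2T) + ((T−1)/(2T))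 · δ. -/
open Finset

private lemma wfp_gauss1 (T : ℕ) : ∑ t ∈ Finset.Icc 1 T, (t : ℝ) = T * (T + 1) / 2 := by
  induction T with
  | zero => simp
  | succ n ih =>
    rw [Finset.sum_Icc_succ_top (by omega), ih]
    push_cast; ring

private lemma wfp_gauss2 (T : ℕ) : ∑ t ∈ Finset.Icc 1 T, ((t : ℝ) - 1) = T * (T - 1) / 2 := by
  induction T with
  | zero => simp
  | succ n ih =>
    rw [Finset.sum_Icc_succ_top (by omega), ih]
    push_cast; ring

private lemma wfp_swap (f : ℕ → ℝ) (T : ℕ) :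
    ∑ t' ∈ Finset.Icc 1 T, ∑ t ∈ Finset.Icc 1 (t' - 1), f t
      = ∑ t ∈ Finset.Icc 1 T, ((T : ℝ) - t) * f t := by
  induction T with
  | zero => simp
  | succ n ih =>
    rw [Finset.sum_Icc_succ_top (by omega), Finset.sum_Icc_succ_top (by omega), ih]
    have hn : n + 1 - 1 = n := by omega
    rw [hn]
    simp only [sub_self, zero_mul, add_zero]
    rw [← Finset.sum_add_distrib]
    apply Finset.sum_congr rfl
    intro t ht
    push_cast
    ring

/-- Weakened fictitious play approximation guarantee
(Corollary extending Conitzer 2009, Theorem 1). -/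
theorem weakened_fictitious_play
    (a b : ℕ) (u : (Fin a → ℝ) →ₗ[ℝ] (Fin b → ℝ) →ₗ[ℝ] ℝ)
    (hu01 : ∀ x y, IsLottery x → IsLottery y → u x y ∈ Set.Icc (0 : ℝ) 1)
    (T : ℕ) (hT : 0 < T)
    (x1 : ℕ → Fin a → ℝ) (x2 : ℕ → Fin b → ℝ)
    (hx1 : ∀ t, IsLottery (x1 t)) (hx2 : ∀ t, IsLottery (x2 t))
    (δ : ℝ) (hδ : 0 ≤ δ)
    (hbr : ∀ t', 2 ≤ t' → t' ≤ T → ∀ z : Fin a → ℝ, IsLottery z →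
      u z ((1 / ((t' : ℝ) - 1)) • ∑ t ∈ Finset.Icc 1 (t' - 1), x2 t) - δ ≤
        u (x1 t') ((1 / ((t' : ℝ) - 1)) • ∑ t ∈ Finset.Icc 1 (t' - 1), x2 t)) :
    ∀ z : Fin a → ℝ, IsLottery z →
      u z ((1 / (T : ℝ)) • ∑ t ∈ Finset.Icc 1 T, x2 t) -
        u ((1 / (T : ℝ)) • ∑ t ∈ Finset.Icc 1 T, x1 t)
          ((1 / (T : ℝ)) • ∑ t ∈ Finset.Icc 1 T, x2 t) ≤
      ((T : ℝ) + 1) / (2 * T) + (((T : ℝ) - 1) / (2 * T)) * δ := by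
  intro z hz
  have hT' : (0 : ℝ) < T := by exact_mod_cast hT
  have hTne : (T : ℝ) ≠ 0 := ne_of_gt hT'
  have hc0 : ∀ t' t, 0 ≤ u (x1 t') (x2 t) := fun t' t => (hu01 _ _ (hx1 t') (hx2 t)).1
  have hper : ∀ t' ∈ Finset.Icc 1 T,
      (∑ t ∈ Finset.Icc 1 (t' - 1), u z (x2 t)) - ((t' : ℝ) - 1) * δ ≤
        ∑ t ∈ Finset.Icc 1 T, u (x1 t') (x2 t) := by
    intro t' ht'
    rw [Finset.mem_Icc] at ht'
    rcases eq_or_lt_of_le ht'.1 with h1 | h2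
    · rw [← h1]
      simp only [Nat.cast_one, sub_self, zero_mul, Nat.sub_self]
      rw [show Finset.Icc 1 0 = (∅ : Finset ℕ) from rfl]
      simp only [Finset.sum_empty, sub_zero]
      exact Finset.sum_nonneg fun t _ => hc0 1 t
    · have ht2 : 2 ≤ t' := h2
      have hpos : (0 : ℝ) < (t' : ℝ) - 1 := by
        have : (2 : ℝ) ≤ (t' : ℝ) := by exact_mod_cast ht2
        linarith
      have h := hbr t' ht2 ht'.2 z hz
      simp only [map_smul, map_sum, smul_eq_mul] at h
      have hsub : Finset.Icc 1 (t' - 1) ⊆ Finset.Icc 1 T :=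
        Finset.Icc_subset_Icc_right (by omega)
      have hmono : ∑ t ∈ Finset.Icc 1 (t' - 1), u (x1 t') (x2 t)
          ≤ ∑ t ∈ Finset.Icc 1 T, u (x1 t') (x2 t) :=
        Finset.sum_le_sum_of_subset_of_nonneg hsub (fun t _ _ => hc0 t' t)
      have hinv : ((t' : ℝ) - 1) * (1 / ((t' : ℝ) - 1)) = 1 := by field_simp
      have h' := mul_le_mul_of_nonneg_left h hpos.le
      rw [mul_sub, ← mul_assoc, ← mul_assoc, hinv, one_mul, one_mul] at h'
      linarith
  have key : (T : ℝ) * (∑ t ∈ Finset.Icc 1 T, u z (x2 t)) -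
      ∑ t' ∈ Finset.Icc 1 T, ∑ t ∈ Finset.Icc 1 T, u (x1 t') (x2 t) ≤
      (T : ℝ) * ((T : ℝ) + 1) / 2 + ((T : ℝ) * ((T : ℝ) - 1) / 2) * δ := by
    have hsum := Finset.sum_le_sum hper
    rw [Finset.sum_sub_distrib, wfp_swap, ← Finset.sum_mul, wfp_gauss2] at hsum
    have h3 : ∑ t ∈ Finset.Icc 1 T, (t : ℝ) * u z (x2 t) ≤ (T : ℝ) * ((T : ℝ) + 1) / 2 := by
      rw [← wfp_gauss1]
      apply Finset.sum_le_sum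
      intro t ht
      have h2 := (hu01 z (x2 t) hz (hx2 t)).2
      nlinarith [Nat.cast_nonneg (α := ℝ) t]
    have h4 : (T : ℝ) * (∑ t ∈ Finset.Icc 1 T, u z (x2 t)) -
        ∑ t ∈ Finset.Icc 1 T, ((T : ℝ) - t) * u z (x2 t)
        = ∑ t ∈ Finset.Icc 1 T, (t : ℝ) * u z (x2 t) := by
      rw [Finset.mul_sum, ← Finset.sum_sub_distrib]
      exact Finset.sum_congr rfl (fun t _ => by ring)
    linarith
  have e1 : u z ((1 / (T : ℝ)) • ∑ t ∈ Finset.Icc 1 T, x2 t)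
      = (1 / (T : ℝ)) * ∑ t ∈ Finset.Icc 1 T, u z (x2 t) := by
    simp [map_smul, map_sum, smul_eq_mul]
  have e2 : u ((1 / (T : ℝ)) • ∑ t ∈ Finset.Icc 1 T, x1 t)
        ((1 / (T : ℝ)) • ∑ t ∈ Finset.Icc 1 T, x2 t)
      = (1 / (T : ℝ)) * ((1 / (T : ℝ)) *
          ∑ t' ∈ Finset.Icc 1 T, ∑ t ∈ Finset.Icc 1 T, u (x1 t') (x2 t)) := by
    simp [map_smul, map_sum, LinearMap.smul_apply, LinearMap.sum_apply, smul_eq_mul,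
      Finset.mul_sum]
    rw [Finset.sum_comm]
  rw [e1, e2]
  have hrw : 1 / (T:ℝ) * (∑ t ∈ Finset.Icc 1 T, u z (x2 t)) -
      1 / (T:ℝ) * (1 / (T:ℝ) * ∑ t' ∈ Finset.Icc 1 T, ∑ t ∈ Finset.Icc 1 T, u (x1 t') (x2 t))
      = ((T:ℝ) * (∑ t ∈ Finset.Icc 1 T, u z (x2 t)) -
          ∑ t' ∈ Finset.Icc 1 T, ∑ t ∈ Finset.Icc 1 T, u (x1 t') (x2 t)) / (T:ℝ)^2 := by
    field_simp
  rw [hrw]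
  calc ((T:ℝ) * (∑ t ∈ Finset.Icc 1 T, u z (x2 t)) -
          ∑ t' ∈ Finset.Icc 1 T, ∑ t ∈ Finset.Icc 1 T, u (x1 t') (x2 t)) / (T:ℝ)^2
      ≤ ((T:ℝ) * ((T:ℝ) + 1) / 2 + ((T:ℝ) * ((T:ℝ) - 1) / 2) * δ) / (T:ℝ)^2 :=
        (div_le_div_iff_of_pos_right (by positivity)).mpr key
    _ = ((T:ℝ) + 1) / (2 * T) + (((T:ℝ) - 1) / (2 * T)) * δ := by
        field_simp
end

section
/- Let u_1: Δ(A_1) × Δ(A_2) → [0,1] be bilinear, and suppose for each t' in {2,…,T}, u_1(x¹_{t'}, x̄²_{t'−1}) ≥ max_z u_1(z, x̄²_{t'−1}) − δ where x̄²_{t'−1} is the average of x²_1,…,x²_{t'−1}. Then for any fixed strategy b, u_1(x¹_{t'}, x̄²_T) ≥ (1/T) sum_{t=1}^{t'−1} (u_1(b, x²_t) − δ), where x̄²_T = (1/T) sum_{t=1}^T x²_t. -/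
open Finset

/-- Key intermediate inequality of the weakened fictitious play bound:
an approximate best response to the history retains value against the full
average up to truncation. -/
theorem wfp_intermediate
    (a b : ℕ) (u : (Fin a → ℝ) →ₗ[ℝ] (Fin b → ℝ) →ₗ[ℝ] ℝ)
    (hu0 : ∀ x y, IsLottery x → IsLottery y → 0 ≤ u x y)
    (T : ℕ) (hT : 0 < T)
    (x1 : ℕ → Fin a → ℝ) (x2 : ℕ → Fin b → ℝ)
    (hx1 : ∀ t, IsLottery (x1 t)) (hx2 : ∀ t, IsLottery (x2 t))
    (δ : ℝ) (hδ : 0 ≤ δ)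
    (hbr : ∀ t', 2 ≤ t' → t' ≤ T → ∀ z : Fin a → ℝ, IsLottery z →
      u z ((1 / ((t' : ℝ) - 1)) • ∑ t ∈ Finset.Icc 1 (t' - 1), x2 t) - δ ≤
        u (x1 t') ((1 / ((t' : ℝ) - 1)) • ∑ t ∈ Finset.Icc 1 (t' - 1), x2 t)) :
    ∀ t', 2 ≤ t' → t' ≤ T → ∀ bstrat : Fin a → ℝ, IsLottery bstrat →
      (1 / (T : ℝ)) * ∑ t ∈ Finset.Icc 1 (t' - 1), (u bstrat (x2 t) - δ) ≤
        u (x1 t') ((1 / (T : ℝ)) • ∑ t ∈ Finset.Icc 1 T, x2 t) := by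

  intro t' h2 hT' bstrat hb
  have h1le : 1 ≤ t' := le_trans one_le_two h2
  have hnpos : (0:ℝ) < (t':ℝ) - 1 := by
    have : (2:ℝ) ≤ (t':ℝ) := by exact_mod_cast h2
    linarith
  have hTpos : (0:ℝ) < (T:ℝ) := by exact_mod_cast hT
  have key := hbr t' h2 hT' bstrat hb
  simp only [map_smul, smul_eq_mul] at key
  set S := ∑ t ∈ Finset.Icc 1 (t'-1), x2 t with hS
  have hcard : ((Finset.Icc 1 (t'-1)).card : ℝ) = (t':ℝ) - 1 := by
    rw [Nat.card_Icc]
    have h : t' - 1 + 1 - 1 = t' - 1 := by omega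
    rw [h, Nat.cast_sub h1le]
    push_cast; ring
  have hc : ((t':ℝ) - 1) * (1/((t':ℝ)-1)) = 1 := mul_one_div_cancel hnpos.ne'
  have key2 : u bstrat S - ((t':ℝ)-1) * δ ≤ u (x1 t') S := by
    have h := mul_le_mul_of_nonneg_left key hnpos.le
    rw [mul_sub, ← mul_assoc, ← mul_assoc, hc, one_mul, one_mul] at h
    linarith
  have hsub : Finset.Icc 1 (t'-1) ⊆ Finset.Icc 1 T := by
    apply Finset.Icc_subset_Icc_right; omega
  have hsum : u (x1 t') S ≤ u (x1 t') (∑ t ∈ Finset.Icc 1 T, x2 t) := by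
    rw [hS, map_sum, map_sum]
    apply Finset.sum_le_sum_of_subset_of_nonneg hsub
    intro t _ _
    exact hu0 _ _ (hx1 t') (hx2 t)
  have hL : ∑ t ∈ Finset.Icc 1 (t'-1), (u bstrat (x2 t) - δ)
      = u bstrat S - ((t':ℝ)-1) * δ := by
    rw [Finset.sum_sub_distrib, Finset.sum_const, hS, map_sum, nsmul_eq_mul, hcard]
  rw [map_smul, smul_eq_mul, hL]
  have := le_trans key2 hsum
  apply mul_le_mul_of_nonneg_left this
  positivity
end
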